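/- arXiv:2602.04048 — 2 statements merged into one kernel-verified Lean document; each statement's English description precedes it below -/
import Mathlib

section
/- Weak duality: Let J, I be finite sets, c ∈ ℝ^J, and for each i ∈ I let F^i : ℝ^J → ℝ^{M_i} be continuously differentiable and g_i : ℝ^{M_i} → ℝ ∪ {+∞} be proper closed convex, with (x,u) ↦ g_i(F^i(x)+u) jointly convex. Suppose x̄ ∈ ℝ^J and (ȳ, w̄) with ȳ^i ∈ ℝ^{M_i}, w̄^i ∈ ℝ^J satisfy the stationarity condition Σ_{i∈I} ∇F^i(w̄^i)ᵀ ȳ^i = c. Then c·x̄ + Σ_{i∈I} g_i(F^i(x̄)) ≥ −Σ_{i∈I} [ (∇F^i(w̄^i) w̄^i − F^i(w̄^i))·(−ȳ^i) + g_i*(−ȳ^i) ]. -/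
open scoped RealInnerProductSpace
open Topology Filter

noncomputable section

/-- Convex conjugate of an extended-real-valued function on a real inner product space. -/
def conjFn {E : Type*} [NormedAddCommGroup E] [InnerProductSpace ℝ E]
    (g : E → EReal) (y : E) : EReal :=
  ⨆ z : E, ((⟪y, z⟫ : ℝ) : EReal) - g z

/-- A proper extended-real-valued function: somewhere finite, never `-∞`. -/
def ProperFn {E : Type*} (g : E → EReal) : Prop :=
  (∃ z, g z ≠ ⊤) ∧ ∀ z, g z ≠ ⊥

/-- Convexity of an extended-real-valued function, via convexity of its epigraph. -/
def ConvexFn {E : Type*} [AddCommMonoid E] [Module ℝ E] (g : E → EReal) : Prop :=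
  Convex ℝ {p : E × ℝ | g p.1 ≤ (p.2 : EReal)}

section Aux

variable {U E : Type*} [NormedAddCommGroup U] [InnerProductSpace ℝ U]
  [NormedAddCommGroup E] [InnerProductSpace ℝ E]

lemma descent_step (g : E → EReal) (F : U → E) (hbot : ∀ z, g z ≠ ⊥)
    (hconv : ConvexFn (fun p : U × E => g (F p.1 + p.2)))
    (x w : U) (t : ℝ) (ht0 : 0 ≤ t) (ht1 : t ≤ 1) (v : E) :
    g (v + (F (t • x + (1 - t) • w) - t • F x - (1 - t) • F w)) ≤ g v := by
  rcases eq_or_ne (g v) ⊤ with h | h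
  · exact h ▸ le_top
  set r := (g v).toReal with hrdef
  have hreq : g v = (r : EReal) := (EReal.coe_toReal h (hbot v)).symm
  have h1 : ((x, v - F x), r) ∈ {p : (U × E) × ℝ | g (F p.1.1 + p.1.2) ≤ (p.2 : EReal)} := by
    simp only [Set.mem_setOf_eq, add_sub_cancel]
    exact hreq.le
  have h2 : ((w, v - F w), r) ∈ {p : (U × E) × ℝ | g (F p.1.1 + p.1.2) ≤ (p.2 : EReal)} := by
    simp only [Set.mem_setOf_eq, add_sub_cancel]
    exact hreq.le
  have hmem := hconv h1 h2 (a := t) (b := 1 - t) ht0 (by linarith) (by ring)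
  simp only [Prod.smul_mk, Prod.mk_add_mk, smul_eq_mul, Set.mem_setOf_eq] at hmem
  have harg : F (t • x + (1 - t) • w) + (t • (v - F x) + (1 - t) • (v - F w))
      = v + (F (t • x + (1 - t) • w) - t • F x - (1 - t) • F w) := by
    module
  have hcoef : t * r + (1 - t) * r = r := by ring
  rw [harg, hcoef] at hmem
  exact hmem.trans_eq hreq.symm

lemma conj_ne_bot (g : E → EReal) (hbot : ∀ z, g z ≠ ⊥) (hfin : ∃ z, g z ≠ ⊤) (p : E) :
    conjFn g p ≠ ⊥ := by
  obtain ⟨z, hz⟩ := hfin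
  have h1 : ((⟪p, z⟫ : ℝ) : EReal) - g z ≤ conjFn g p :=
    le_iSup (fun z => ((⟪p, z⟫ : ℝ) : EReal) - g z) z
  intro hc
  rw [hc, le_bot_iff] at h1
  rw [show g z = ((g z).toReal : EReal) from (EReal.coe_toReal hz (hbot z)).symm,
    ← EReal.coe_sub] at h1
  exact EReal.coe_ne_bot _ h1

lemma conj_dir (g : E → EReal) (hbot : ∀ z, g z ≠ ⊥) (p e v0 : E) (hv0 : g v0 ≠ ⊤)
    (hC : conjFn g p ≠ ⊤) (hdesc : ∀ n : ℕ, g (v0 + (n : ℝ) • e) ≤ g v0) :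
    ⟪p, e⟫ ≤ (0 : ℝ) := by
  have hCb : conjFn g p ≠ ⊥ := conj_ne_bot g hbot ⟨v0, hv0⟩ p
  set C := (conjFn g p).toReal with hCdef
  have hCeq : conjFn g p = (C : EReal) := (EReal.coe_toReal hC hCb).symm
  set r := (g v0).toReal with hrdef
  have hreq : g v0 = (r : EReal) := (EReal.coe_toReal hv0 (hbot v0)).symm
  have key : ∀ n : ℕ, ⟪p, v0⟫ + (n : ℝ) * ⟪p, e⟫ - r ≤ C := by
    intro n
    have h1 : ((⟪p, v0 + (n : ℝ) • e⟫ : ℝ) : EReal) - g (v0 + (n : ℝ) • e) ≤ conjFn g p :=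
      le_iSup (fun z => ((⟪p, z⟫ : ℝ) : EReal) - g z) _
    have h2 : ((⟪p, v0 + (n : ℝ) • e⟫ : ℝ) : EReal) - (r : EReal)
        ≤ ((⟪p, v0 + (n : ℝ) • e⟫ : ℝ) : EReal) - g (v0 + (n : ℝ) • e) :=
      EReal.sub_le_sub le_rfl (hreq ▸ hdesc n)
    have h3 := (h2.trans h1).trans_eq hCeq
    rw [← EReal.coe_sub, EReal.coe_le_coe_iff] at h3
    rw [inner_add_right, real_inner_smul_right] at h3
    linarith
  by_contra hpos
  push_neg at hpos
  obtain ⟨n, hn⟩ := exists_nat_gt ((C + r - ⟪p, v0⟫) / ⟪p, e⟫)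
  have := key n
  rw [div_lt_iff₀ hpos] at hn
  linarith

lemma lin_le (g : E → EReal) (F : U → E) (hbot : ∀ z, g z ≠ ⊥)
    (hconv : ConvexFn (fun p : U × E => g (F p.1 + p.2)))
    (x0 : U) (hx0 : g (F x0) ≠ ⊤)
    (hF : Differentiable ℝ F)
    (y : E) (hC : conjFn g (-y) ≠ ⊤) (x w : U) :
    ⟪y, F x - F w - fderiv ℝ F w (x - w)⟫ ≤ (0 : ℝ) := by
  set d := x - w with hd
  set A := fderiv ℝ F w with hA
  have hemain : ∀ t : ℝ, 0 ≤ t → t ≤ 1 →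
      ⟪-y, F (t • x + (1 - t) • w) - t • F x - (1 - t) • F w⟫ ≤ (0 : ℝ) := by
    intro t h0 h1
    set e := F (t • x + (1 - t) • w) - t • F x - (1 - t) • F w with he
    refine conj_dir g hbot (-y) e (F x0) hx0 hC ?_
    intro n
    induction n with
    | zero => simp
    | succ n ih =>
      have hsm : ((n + 1 : ℕ) : ℝ) • e = (n : ℝ) • e + e := by
        push_cast
        rw [add_smul, one_smul]
      rw [hsm, ← add_assoc]
      exact le_trans (descent_step g F hbot hconv x w t h0 h1 _) ih
  have hline : HasDerivAt (fun t : ℝ => w + t • d) d 0 := by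
    simpa using ((hasDerivAt_id (0 : ℝ)).smul_const d).const_add w
  have hAw : HasFDerivAt F A (w + (0 : ℝ) • d) := by
    simpa using (hF w).hasFDerivAt
  have hderiv : HasDerivAt (fun t : ℝ => F (w + t • d)) (A d) 0 := by
    exact hAw.comp_hasDerivAt 0 hline
  have hslope : Filter.Tendsto (fun t : ℝ => t⁻¹ • (F (w + t • d) - F w)) (𝓝[>] 0)
      (𝓝 (A d)) := by
    have h := hasDerivAt_iff_tendsto_slope.mp hderiv
    have h' := h.mono_left (nhdsWithin_mono _ (fun t ht => ne_of_gt ht))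
    refine h'.congr (fun t => ?_)
    simp [slope_def_module]
  have hphi : Filter.Tendsto (fun t : ℝ => ⟪-y, t⁻¹ • (F (w + t • d) - F w) - (F x - F w)⟫)
      (𝓝[>] 0) (𝓝 (⟪-y, A d - (F x - F w)⟫ : ℝ)) :=
    Filter.Tendsto.inner tendsto_const_nhds (hslope.sub tendsto_const_nhds)
  have hle : ⟪-y, A d - (F x - F w)⟫ ≤ (0 : ℝ) := by
    refine le_of_tendsto hphi ?_
    filter_upwards [Ioo_mem_nhdsGT_of_mem (Set.mem_Ico.mpr ⟨le_refl (0:ℝ), zero_lt_one⟩)]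
      with t ht
    have h0 : 0 < t := ht.1
    have h1 : t ≤ 1 := ht.2.le
    have hpt : t • x + (1 - t) • w = w + t • d := by rw [hd]; module
    have hargs : t⁻¹ • (F (w + t • d) - F w) - (F x - F w)
        = t⁻¹ • (F (t • x + (1 - t) • w) - t • F x - (1 - t) • F w) := by
      rw [hpt]
      match_scalars <;> field_simp <;> ring
    rw [hargs, real_inner_smul_right]
    exact mul_nonpos_of_nonneg_of_nonpos (inv_nonneg.mpr h0.le)
      (hemain t h0.le h1)
  have heq : ⟪y, F x - F w - A d⟫ = ⟪-y, A d - (F x - F w)⟫ := by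
    rw [inner_neg_left]
    rw [show A d - (F x - F w) = -(F x - F w - A d) by abel, inner_neg_right]
    ring
  rw [heq]
  exact hle

lemma ereal_sum_ne_bot {ι : Type*} (s : Finset ι) (f : ι → EReal)
    (h : ∀ i ∈ s, f i ≠ ⊥) : ∑ i ∈ s, f i ≠ ⊥ := by
  classical
  induction s using Finset.induction with
  | empty => simp
  | @insert a s' hx ih =>
    rw [Finset.sum_insert hx]
    intro hc
    rcases EReal.add_eq_bot_iff.mp hc with h' | h'
    · exact h a (Finset.mem_insert_self a s') h'
    · exact ih (fun i hi => h i (Finset.mem_insert_of_mem hi)) h'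

lemma ereal_coe_sum {ι : Type*} (s : Finset ι) (f : ι → ℝ) :
    ((∑ i ∈ s, f i : ℝ) : EReal) = ∑ i ∈ s, ((f i : ℝ) : EReal) := by
  classical
  induction s using Finset.induction with
  | empty => simp
  | @insert i s' hi ih => rw [Finset.sum_insert hi, Finset.sum_insert hi, EReal.coe_add, ih]

end Aux

/-- Weak duality for the MathOpt primal-dual pair: if `(ȳ, w̄)` satisfies the stationarity
condition `Σᵢ ∇Fⁱ(w̄ⁱ)ᵀ ȳⁱ = c`, then
`c·x̄ + Σᵢ gᵢ(Fⁱ(x̄)) ≥ −Σᵢ [(∇Fⁱ(w̄ⁱ) w̄ⁱ − Fⁱ(w̄ⁱ))·(−ȳⁱ) + gᵢ*(−ȳⁱ)]`. -/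
theorem weak_duality {J I : Type*} [Fintype J] [Fintype I]
    (M : I → Type*) [∀ i, Fintype (M i)]
    (c : EuclideanSpace ℝ J)
    (F : ∀ i, EuclideanSpace ℝ J → EuclideanSpace ℝ (M i))
    (g : ∀ i, EuclideanSpace ℝ (M i) → EReal)
    (hF : ∀ i, ContDiff ℝ 1 (F i))
    (hgproper : ∀ i, ProperFn (g i))
    (hgclosed : ∀ i, LowerSemicontinuous (g i))
    (hgconv : ∀ i, ConvexFn (g i))
    (hgFproper : ∀ i, ∃ x, g i (F i x) ≠ ⊤)
    (hjoint : ∀ i, ConvexFn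
      (fun p : EuclideanSpace ℝ J × EuclideanSpace ℝ (M i) => g i (F i p.1 + p.2)))
    (x : EuclideanSpace ℝ J)
    (y : ∀ i, EuclideanSpace ℝ (M i)) (w : ∀ i, EuclideanSpace ℝ J)
    (hstat : ∑ i, (fderiv ℝ (F i) (w i)).adjoint (y i) = c) :
    (-(∑ i, ((((⟪(fderiv ℝ (F i) (w i)) (w i) - F i (w i), -(y i)⟫ : ℝ)) : EReal)
          + conjFn (g i) (-(y i)))) : EReal)
      ≤ ((⟪c, x⟫ : ℝ) : EReal) + ∑ i, g i (F i x) := by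
  classical
  set A : ∀ i, EuclideanSpace ℝ J →L[ℝ] EuclideanSpace ℝ (M i) :=
    fun i => fderiv ℝ (F i) (w i) with hAdef
  have hbot : ∀ i, ∀ z, g i z ≠ ⊥ := fun i => (hgproper i).2
  have hconjbot : ∀ i, conjFn (g i) (-(y i)) ≠ ⊥ :=
    fun i => conj_ne_bot (g i) (hbot i) (hgproper i).1 _
  set a : I → ℝ := fun i => ⟪A i (w i) - F i (w i), -(y i)⟫ with hadef
  set term : I → EReal := fun i => ((a i : ℝ) : EReal) + conjFn (g i) (-(y i)) with htermdef
  have htermbot : ∀ i, term i ≠ ⊥ := by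
    intro i hcon
    rcases EReal.add_eq_bot_iff.mp hcon with h | h
    · exact EReal.coe_ne_bot _ h
    · exact hconjbot i h
  by_cases hc : ∀ i, conjFn (g i) (-(y i)) ≠ ⊤
  · -- all conjugates finite
    set C : I → ℝ := fun i => (conjFn (g i) (-(y i))).toReal with hCdef
    have hCeq : ∀ i, conjFn (g i) (-(y i)) = ((C i : ℝ) : EReal) :=
      fun i => (EReal.coe_toReal (hc i) (hconjbot i)).symm
    have hterm : ∀ i, term i = (((a i + C i : ℝ)) : EReal) := by
      intro i
      rw [htermdef]
      simp only
      rw [hCeq i, ← EReal.coe_add]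
    by_cases hfx : ∀ i, g i (F i x) ≠ ⊤
    · -- everything finite: reduce to a real inequality
      set r : I → ℝ := fun i => (g i (F i x)).toReal with hrdef
      have hreq : ∀ i, g i (F i x) = ((r i : ℝ) : EReal) :=
        fun i => (EReal.coe_toReal (hfx i) (hbot i _)).symm
      have hLHS : (∑ i, term i) = (((∑ i, (a i + C i) : ℝ)) : EReal) := by
        rw [Finset.sum_congr rfl (fun i _ => hterm i), ereal_coe_sum]
      have hRHS : (∑ i, g i (F i x)) = (((∑ i, r i : ℝ)) : EReal) := by
        rw [Finset.sum_congr rfl (fun i _ => hreq i), ereal_coe_sum]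
      rw [hLHS, hRHS, ← EReal.coe_neg, ← EReal.coe_add, EReal.coe_le_coe_iff]
      -- real inequality
      have hFY : ∀ i, ⟪-(y i), F i x⟫ - C i ≤ r i := by
        intro i
        have h1 : ((⟪-(y i), F i x⟫ : ℝ) : EReal) - g i (F i x) ≤ conjFn (g i) (-(y i)) :=
          le_iSup (fun z => ((⟪-(y i), z⟫ : ℝ) : EReal) - g i z) (F i x)
        rw [hreq i, hCeq i, ← EReal.coe_sub, EReal.coe_le_coe_iff] at h1
        linarith
      have hB : ∀ i, ⟪y i, F i x - F i (w i) - A i (x - w i)⟫ ≤ (0 : ℝ) := by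
        intro i
        obtain ⟨x0, hx0⟩ := hgFproper i
        exact lin_le (g i) (F i) (hbot i) (hjoint i) x0 hx0
          ((hF i).differentiable one_ne_zero) (y i) (hc i) x (w i)
      have hcx : ⟪c, x⟫ = ∑ i, ⟪y i, A i x⟫ := by
        rw [← hstat, sum_inner]
        exact Finset.sum_congr rfl (fun i _ => ContinuousLinearMap.adjoint_inner_left _ _ _)
      have hper : ∀ i, -(a i + C i) ≤ ⟪y i, A i x⟫ + r i := by
        intro i
        have h1 := hFY i
        have h2 := hB i
        rw [inner_sub_right, inner_sub_right, map_sub, inner_sub_right] at h2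
        have ha : a i = -(⟪y i, A i (w i)⟫ - ⟪y i, F i (w i)⟫) := by
          rw [hadef]
          simp only
          rw [inner_neg_right, real_inner_comm, inner_sub_right]
        rw [inner_neg_left] at h1
        rw [ha]
        linarith
      calc -(∑ i, (a i + C i)) = ∑ i, -(a i + C i) := by rw [← Finset.sum_neg_distrib]
        _ ≤ ∑ i, (⟪y i, A i x⟫ + r i) := Finset.sum_le_sum (fun i _ => hper i)
        _ = ⟪c, x⟫ + ∑ i, r i := by rw [Finset.sum_add_distrib, hcx]
    · -- some primal value is +∞ : RHS = ⊤
      push_neg at hfx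
      obtain ⟨i0, hi0⟩ := hfx
      have hsum : (∑ i, g i (F i x)) = ⊤ := by
        rw [← Finset.add_sum_erase _ _ (Finset.mem_univ i0), hi0]
        exact EReal.top_add_of_ne_bot
          (ereal_sum_ne_bot _ _ (fun i _ => hbot i _))
      rw [hsum, EReal.add_top_of_ne_bot (EReal.coe_ne_bot _)]
      exact le_top
  · -- some conjugate is +∞ : LHS = ⊥
    push_neg at hc
    obtain ⟨i0, hi0⟩ := hc
    have hti0 : term i0 = ⊤ := by
      rw [htermdef]
      simp only
      rw [hi0]
      exact EReal.add_top_of_ne_bot (EReal.coe_ne_bot _)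
    have hsum : (∑ i, term i) = ⊤ := by
      rw [← Finset.add_sum_erase _ _ (Finset.mem_univ i0), hti0]
      exact EReal.top_add_of_ne_bot
        (ereal_sum_ne_bot _ _ (fun i _ => htermbot i))
    show -(∑ i, term i) ≤ _
    rw [hsum]
    exact bot_le
end
end

section
/- Fenchel-type inequality for composite functions: Let F : ℝ^J → ℝ^M be continuously differentiable, g : ℝ^M → ℝ ∪ {+∞} proper closed convex with g∘F not identically +∞ and (x,u) ↦ g(F(x)+u) jointly convex. Then for any x̄, w̄ ∈ ℝ^J and y ∈ ℝ^M: g(F(x̄)) + (∇F(w̄) w̄ − F(w̄))·y + g*(y) ≥ (∇F(w̄)ᵀ y)·x̄. -/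
open scoped RealInnerProductSpace

noncomputable section

/-- Joint convexity implies `x ↦ ⟪y, F x⟫` is convex, given an affine minorant of `g`
with slope `y` and near-attainment. -/
lemma inner_comp_convexOn {J M : Type*} [Fintype J] [Fintype M]
    (F : EuclideanSpace ℝ J → EuclideanSpace ℝ M)
    (g : EuclideanSpace ℝ M → EReal)
    (hjoint : ConvexFn
      (fun p : EuclideanSpace ℝ J × EuclideanSpace ℝ M => g (F p.1 + p.2)))
    (y : EuclideanSpace ℝ M) (c : ℝ)
    (hle : ∀ v, (((⟪y, v⟫ : ℝ) - c : ℝ) : EReal) ≤ g v)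
    (happrox : ∀ ε : ℝ, 0 < ε → ∃ (z : EuclideanSpace ℝ M) (r : ℝ), g z ≤ (r : EReal) ∧ r ≤ ⟪y, z⟫ - c + ε) :
    ConvexOn ℝ Set.univ (fun v => (⟪y, F v⟫ : ℝ)) := by
  refine ⟨convex_univ, ?_⟩
  intro x₁ _ x₂ _ a b ha hb hab
  simp only [smul_eq_mul]
  refine le_of_forall_pos_le_add ?_
  intro ε hε
  obtain ⟨z, r, hgz, hr⟩ := happrox ε hε
  have h₁ : ((x₁, z - F x₁), r) ∈
      {p : (EuclideanSpace ℝ J × EuclideanSpace ℝ M) × ℝ |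
        g (F p.1.1 + p.1.2) ≤ (p.2 : EReal)} := by
    simp only [Set.mem_setOf_eq, add_sub_cancel]
    exact hgz
  have h₂ : ((x₂, z - F x₂), r) ∈
      {p : (EuclideanSpace ℝ J × EuclideanSpace ℝ M) × ℝ |
        g (F p.1.1 + p.1.2) ≤ (p.2 : EReal)} := by
    simp only [Set.mem_setOf_eq, add_sub_cancel]
    exact hgz
  have hmem := hjoint h₁ h₂ ha hb hab
  simp only [Prod.smul_mk, Prod.mk_add_mk, Set.mem_setOf_eq, smul_eq_mul] at hmem
  have harr : a • (z - F x₁) + b • (z - F x₂) = z - (a • F x₁ + b • F x₂) := by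
    have hz : a • z + b • z = z := by rw [← add_smul, hab, one_smul]
    calc a • (z - F x₁) + b • (z - F x₂)
        = (a • z + b • z) - (a • F x₁ + b • F x₂) := by
          rw [smul_sub, smul_sub]; abel
      _ = z - (a • F x₁ + b • F x₂) := by rw [hz]
  rw [harr] at hmem
  have hrr : a * r + b * r = r := by rw [← add_mul, hab, one_mul]
  rw [hrr] at hmem
  set v := F (a • x₁ + b • x₂) + (z - (a • F x₁ + b • F x₂)) with hv
  have hfin : (((⟪y, v⟫ : ℝ) - c : ℝ) : EReal) ≤ (r : EReal) := le_trans (hle v) hmem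
  have hreal : (⟪y, v⟫ : ℝ) - c ≤ r := by exact_mod_cast hfin
  have hinner : (⟪y, v⟫ : ℝ)
      = ⟪y, F (a • x₁ + b • x₂)⟫ + ⟪y, z⟫ - (a * ⟪y, F x₁⟫ + b * ⟪y, F x₂⟫) := by
    simp [hv, inner_add_right, inner_sub_right, inner_smul_right]
    ring
  rw [hinner] at hreal
  linarith

/-- Fenchel-type inequality for composite functions:
`g(F(x̄)) + (∇F(w̄) w̄ − F(w̄))·y + g*(y) ≥ (∇F(w̄)ᵀ y)·x̄`. -/
theorem composite_fenchel_inequality {J M : Type*} [Fintype J] [Fintype M]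
    (F : EuclideanSpace ℝ J → EuclideanSpace ℝ M)
    (g : EuclideanSpace ℝ M → EReal)
    (hF : ContDiff ℝ 1 F)
    (hgproper : ProperFn g)
    (hgclosed : LowerSemicontinuous g)
    (hgconv : ConvexFn g)
    (hgFproper : ∃ x, g (F x) ≠ ⊤)
    (hjoint : ConvexFn
      (fun p : EuclideanSpace ℝ J × EuclideanSpace ℝ M => g (F p.1 + p.2)))
    (x w : EuclideanSpace ℝ J) (y : EuclideanSpace ℝ M) :
    ((⟪(fderiv ℝ F w).adjoint y, x⟫ : ℝ) : EReal)
      ≤ g (F x) + (((⟪(fderiv ℝ F w) w - F w, y⟫ : ℝ) : EReal) + conjFn g y) := by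
  obtain ⟨⟨z₀, hz₀⟩, hbot⟩ := hgproper
  set A := fderiv ℝ F w with hA
  -- the conjugate is never ⊥
  have hconj_ne_bot : conjFn g y ≠ ⊥ := by
    intro h
    have h1 : ((⟪y, z₀⟫ : ℝ) : EReal) - g z₀ ≤ conjFn g y :=
      le_iSup (fun z => ((⟪y, z⟫ : ℝ) : EReal) - g z) z₀
    rw [h, le_bot_iff] at h1
    lift g z₀ to ℝ using ⟨hz₀, hbot z₀⟩ with s hs
    rw [← EReal.coe_sub] at h1
    exact EReal.coe_ne_bot _ h1
  by_cases htop : conjFn g y = ⊤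
  · -- RHS is ⊤
    rw [htop, EReal.add_top_of_ne_bot (EReal.coe_ne_bot _),
      EReal.add_top_of_ne_bot (hbot (F x))]
    exact le_top
  · -- conjugate is a real number c
    lift conjFn g y to ℝ using ⟨htop, hconj_ne_bot⟩ with c hc
    -- affine minorant: ⟪y, v⟫ - c ≤ g v for all v
    have hle : ∀ v, (((⟪y, v⟫ : ℝ) - c : ℝ) : EReal) ≤ g v := by
      intro v
      have h1 : ((⟪y, v⟫ : ℝ) : EReal) - g v ≤ (c : EReal) :=
        le_of_le_of_eq (le_iSup (fun z => ((⟪y, z⟫ : ℝ) : EReal) - g z) v) hc.symm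
      by_cases hv : g v = ⊤
      · rw [hv]; exact le_top
      · lift g v to ℝ using ⟨hv, hbot v⟩ with s hs
        rw [← EReal.coe_sub, EReal.coe_le_coe_iff] at h1
        exact EReal.coe_le_coe_iff.mpr (by linarith)
    -- near attainment
    have happrox : ∀ ε : ℝ, 0 < ε → ∃ (z : EuclideanSpace ℝ M) (r : ℝ),
        g z ≤ (r : EReal) ∧ r ≤ ⟪y, z⟫ - c + ε := by
      intro ε hε
      have h1 : ((c - ε : ℝ) : EReal) < conjFn g y := by
        rw [← hc, EReal.coe_lt_coe_iff]; linarith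
      rw [conjFn, lt_iSup_iff] at h1
      obtain ⟨z, hz⟩ := h1
      have hgz_ne_top : g z ≠ ⊤ := by
        intro h
        rw [h, EReal.sub_top] at hz
        exact absurd hz (by simp)
      lift g z to ℝ using ⟨hgz_ne_top, hbot z⟩ with s hs
      refine ⟨z, s, hs.ge, ?_⟩
      rw [← EReal.coe_sub, EReal.coe_lt_coe_iff] at hz
      linarith
    -- convexity of v ↦ ⟪y, F v⟫
    have hphi : ConvexOn ℝ Set.univ (fun v => (⟪y, F v⟫ : ℝ)) :=
      inner_comp_convexOn F g hjoint y c hle happrox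
    -- gradient inequality: ⟪y, A (x - w)⟫ ≤ ⟪y, F x⟫ - ⟪y, F w⟫
    have hgrad : (⟪y, A (x - w)⟫ : ℝ) ≤ ⟪y, F x⟫ - ⟪y, F w⟫ := by
      rcases eq_or_ne x w with rfl | hxw
      · simp
      set γ : ℝ → EuclideanSpace ℝ J := fun t => w + t • (x - w) with hγ
      have hψconv : ConvexOn ℝ Set.univ (fun t : ℝ => (⟪y, F (γ t)⟫ : ℝ)) := by
        set L := AffineMap.lineMap (k := ℝ) (V1 := EuclideanSpace ℝ J) w x with hL
        have h := hphi.comp_affineMap L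
        have hs : (⇑L ⁻¹' (Set.univ : Set (EuclideanSpace ℝ J))) = Set.univ := by simp
        rw [hs] at h
        have heq : ∀ t : ℝ, γ t = L t := by
          intro t
          simp only [hγ, hL, AffineMap.lineMap_apply_module]
          rw [smul_sub, sub_smul, one_smul]
          abel
        have hfun : (fun t : ℝ => (⟪y, F (γ t)⟫ : ℝ))
            = (fun v => (⟪y, F v⟫ : ℝ)) ∘ ⇑L := by
          funext t; simp only [Function.comp_apply]; rw [heq t]
        rw [hfun]; exact h
      have hFd : HasFDerivAt F A w := (hF.differentiable one_ne_zero w).hasFDerivAt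
      have hγd : HasDerivAt γ (x - w) 0 := by
        have : HasDerivAt (fun t : ℝ => t • (x - w)) ((1 : ℝ) • (x - w)) 0 :=
          (hasDerivAt_id 0).smul_const (x - w)
        simpa [hγ] using this.const_add w
      have hγ0 : γ 0 = w := by simp [hγ]
      have hcomp : HasDerivAt (fun t => F (γ t)) (A (x - w)) 0 := by
        have hFd' : HasFDerivAt F A (γ 0) := by rw [hγ0]; exact hFd
        exact hFd'.comp_hasDerivAt 0 hγd
      have hψd : HasDerivAt (fun t => (⟪y, F (γ t)⟫ : ℝ)) (⟪y, A (x - w)⟫ : ℝ) 0 := by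
        simpa using (hasDerivAt_const (0:ℝ) y).inner ℝ hcomp
      have hslope := hψconv.le_slope_of_hasDerivAt (Set.mem_univ 0) (Set.mem_univ 1)
        one_pos hψd
      rw [slope_def_field] at hslope
      simp only [hγ, zero_smul, add_zero, one_smul, add_sub_cancel] at hslope
      have : ((⟪y, F x⟫ : ℝ) - ⟪y, F w⟫) / (1 - 0) = ⟪y, F x⟫ - ⟪y, F w⟫ := by norm_num
      linarith [hslope.trans_eq this]
    -- Fenchel inequality at F x
    by_cases hgFx : g (F x) = ⊤
    · rw [hgFx, ← EReal.coe_add, EReal.top_add_of_ne_bot (EReal.coe_ne_bot _)]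
      exact le_top
    · lift g (F x) to ℝ using ⟨hgFx, hbot (F x)⟩ with r hr
      have hfen : (⟪y, F x⟫ : ℝ) - r ≤ c := by
        have h1 : ((⟪y, F x⟫ : ℝ) : EReal) - (r : EReal) ≤ (c : EReal) := by
          refine le_of_le_of_eq ?_ hc.symm
          calc ((⟪y, F x⟫ : ℝ) : EReal) - (r : EReal)
              = ((⟪y, F x⟫ : ℝ) : EReal) - g (F x) := by rw [← hr]
            _ ≤ _ := le_iSup (fun z => ((⟪y, z⟫ : ℝ) : EReal) - g z) (F x)
        rw [← EReal.coe_sub, EReal.coe_le_coe_iff] at h1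
        exact h1
      have hadj : (⟪A.adjoint y, x⟫ : ℝ) = ⟪y, A x⟫ :=
        ContinuousLinearMap.adjoint_inner_left A x y
      rw [← EReal.coe_add, ← EReal.coe_add, EReal.coe_le_coe_iff, hadj]
      have h2 : (⟪y, A x⟫ : ℝ) = ⟪y, A (x - w)⟫ + ⟪y, A w⟫ := by
        rw [map_sub, inner_sub_right]; ring
      have h3 : (⟪A w - F w, y⟫ : ℝ) = ⟪y, A w⟫ - ⟪y, F w⟫ := by
        rw [inner_sub_left, real_inner_comm (A w) y, real_inner_comm (F w) y]
      linarith
end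
end
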